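/- Let D be a doubly partial order on a finite set V ⊆ ℝ², and let u, v, b ∈ V with v ≺ u and b ≠ u. If b is adjacent to v in the phylogeny graph of D, then b is adjacent to u in the phylogeny graph of D. -/

import Mathlib

/-- `prec x y` means `x₁ < y₁` and `x₂ < y₂`, written `x ≺ y`. -/
def prec (x y : ℝ × ℝ) : Prop := x.1 < y.1 ∧ x.2 < y.2

/-- The phylogeny graph of the doubly partial order on a finite set
`V ⊆ ℝ²` (arcs `(x,v)` exactly when `v ≺ x`). -/
def phylogenyGraph (V : Finset (ℝ × ℝ)) : SimpleGraph {p : ℝ × ℝ // p ∈ V} where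
  Adj u v := u ≠ v ∧
    (prec u.1 v.1 ∨ prec v.1 u.1 ∨ ∃ z ∈ V, prec z u.1 ∧ prec z v.1)
  symm := by
    constructor
    intro u v h
    exact ⟨Ne.symm h.1, by tauto⟩
  loopless := by
    constructor
    intro u h
    exact h.1 rfl

/-- In a doubly partial order, if `v ≺ u` and `b ≠ u` is adjacent to `v` in
the phylogeny graph, then `b` is also adjacent to `u` in the phylogeny
graph. -/
theorem phylogeny_adj_up (V : Finset (ℝ × ℝ)) (u v b : ℝ × ℝ)
    (hu : u ∈ V) (hv : v ∈ V) (hb : b ∈ V)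
    (hvu : prec v u) (hbu : b ≠ u)
    (hadj : (phylogenyGraph V).Adj ⟨b, hb⟩ ⟨v, hv⟩) :
    (phylogenyGraph V).Adj ⟨b, hb⟩ ⟨u, hu⟩ := by
  obtain ⟨hne, h | h | ⟨z, hz, hzb, hzv⟩⟩ := hadj
  · exact ⟨by simpa using hbu, Or.inl ⟨h.1.trans hvu.1, h.2.trans hvu.2⟩⟩
  · exact ⟨by simpa using hbu, Or.inr (Or.inr ⟨v, hv, h, hvu⟩)⟩
  · exact ⟨by simpa using hbu, Or.inr (Or.inr ⟨z, hz, hzb, hzv.1.trans hvu.1, hzv.2.trans hvu.2⟩)⟩
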